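/- Let G be an oriented hypergraph on a nonempty finite vertex set V with |V| = n, and let L = H Hᵀ be its Laplacian. Then λ_n(L) ≤ (1/n) · ∑_{v ∈ V} (d(v) − NumAdj^±(v)) ≤ λ_1(L), where λ_1(L) ≥ … ≥ λ_n(L) are the eigenvalues of L in decreasing order. -/

import Mathlib

open Matrix Finset

/-- For an oriented hypergraph on a nonempty finite vertex set `V` with
`n = |V|` and Laplacian `L = H Hᵀ`, the eigenvalues in decreasing order satisfy
`λ_n(L) ≤ (1/n) ∑_v (d(v) − NumAdj^±(v)) ≤ λ_1(L)`. -/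
theorem laplacian_eigenvalue_bounds_degrees_net_adjacencies
    {V E : Type*} [Fintype V] [Fintype E] [DecidableEq V] [Nonempty V]
    (H : Matrix V E ℝ) (hH : ∀ v e, H v e = -1 ∨ H v e = 0 ∨ H v e = 1)
    (hL : (H * Hᵀ).IsHermitian)
    (μ : Fin (Fintype.card V) → ℝ) (hmono : Antitone μ)
    (hμ : ∃ g : Fin (Fintype.card V) ≃ V, μ = hL.eigenvalues ∘ g)
    (deg : V → ℕ)
    (hdeg : ∀ v, deg v = (Finset.univ.filter (fun e : E => H v e ≠ 0)).card)
    (netAdj : V → ℝ)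
    (hnet : ∀ v, netAdj v = ∑ p ∈ Finset.univ.filter
        (fun p : E × V => p.2 ≠ v ∧ H v p.1 ≠ 0 ∧ H p.2 p.1 ≠ 0),
        -(H v p.1 * H p.2 p.1)) :
    μ ⟨Fintype.card V - 1, Nat.sub_lt Fintype.card_pos Nat.one_pos⟩ ≤
        (1 / (Fintype.card V : ℝ)) * ∑ v, ((deg v : ℝ) - netAdj v) ∧
      (1 / (Fintype.card V : ℝ)) * ∑ v, ((deg v : ℝ) - netAdj v) ≤
        μ ⟨0, Fintype.card_pos⟩ := by
  obtain ⟨g, hg⟩ := hμ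
  set A : Matrix V V ℝ := H * Hᵀ with hA
  set x : V → ℝ := fun _ => 1 with hx
  set U : Matrix V V ℝ := (hL.eigenvectorUnitary : Matrix V V ℝ) with hUdef
  set y : V → ℝ := star U *ᵥ x with hy
  have hUU : U * star U = 1 := (Matrix.mem_unitaryGroup_iff).mp hL.eigenvectorUnitary.2
  have hyx : x ᵥ* U = y := by
    ext j
    simp [hy, Matrix.vecMul, Matrix.mulVec, dotProduct, Matrix.star_apply, mul_comm]
  -- norm preservation
  have h2 : ∑ v, (y v) ^ 2 = (Fintype.card V : ℝ) := by
    have h := congrArg (fun M : Matrix V V ℝ => x ⬝ᵥ (M *ᵥ x)) hUU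
    simp only [← Matrix.mulVec_mulVec, Matrix.one_mulVec] at h
    rw [← hy, Matrix.dotProduct_mulVec, hyx] at h
    have hyy : y ⬝ᵥ y = ∑ v, (y v) ^ 2 := by
      simp [dotProduct, sq]
    rw [hyy] at h
    rw [h]
    simp [hx, dotProduct]
  -- quadratic form in eigen coordinates
  have h1 : x ⬝ᵥ (A *ᵥ x) = ∑ v, hL.eigenvalues v * (y v) ^ 2 := by
    conv_lhs => rw [hL.spectral_theorem, Unitary.conjStarAlgAut_apply]
    rw [← Matrix.mulVec_mulVec, ← hy, Matrix.dotProduct_mulVec, ← Matrix.vecMul_vecMul, hyx]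
    simp only [dotProduct, Matrix.vecMul_diagonal, Function.comp_apply,
      RCLike.ofReal_real_eq_id, id_eq, sq]
    exact Finset.sum_congr rfl fun v _ => by ring
  -- combinatorial identity
  have hv : ∀ v, (deg v : ℝ) - netAdj v = ∑ w, ∑ e, H v e * H w e := by
    intro v
    rw [hdeg, hnet, Finset.sum_filter, Fintype.sum_prod_type]
    have hdegv : (((Finset.univ.filter (fun e : E => H v e ≠ 0)).card : ℕ) : ℝ)
        = ∑ e, H v e * H v e := by
      rw [Finset.card_filter]
      push_cast
      refine Finset.sum_congr rfl fun e _ => ?_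
      rcases hH v e with h | h | h <;> simp [h]
    rw [hdegv, Finset.sum_comm (γ := V)]
    rw [← Finset.sum_sub_distrib]
    refine Finset.sum_congr rfl fun e _ => ?_
    rw [sub_eq_iff_eq_add, ← Finset.sum_add_distrib]
    have : ∀ w, H v e * H w e +
        (if w ≠ v ∧ H v e ≠ 0 ∧ H w e ≠ 0 then -(H v e * H w e) else 0)
        = if w = v then H v e * H w e else 0 := by
      intro w
      by_cases hw : w = v
      · simp [hw]
      · by_cases h2 : H v e = 0 <;> by_cases h3 : H w e = 0 <;> simp [hw, h2, h3]
    rw [Finset.sum_congr rfl fun w _ => this w]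
    simp
  have hsum : ∑ v, ((deg v : ℝ) - netAdj v) = ∑ v, hL.eigenvalues v * (y v) ^ 2 := by
    rw [← h1]
    rw [Finset.sum_congr rfl fun v _ => hv v]
    simp [dotProduct, Matrix.mulVec, Matrix.mul_apply, hx, hA, Finset.mul_sum]
  have heig : ∀ v, hL.eigenvalues v = μ (g.symm v) := by
    intro v; rw [hg]; simp
  have hn : (0 : ℝ) < (Fintype.card V : ℝ) := by
    exact_mod_cast Fintype.card_pos
  set lo : ℝ := μ ⟨Fintype.card V - 1, Nat.sub_lt Fintype.card_pos Nat.one_pos⟩ with hlo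
  set hi : ℝ := μ ⟨0, Fintype.card_pos⟩ with hhi
  have hbound : ∀ i, lo ≤ μ i ∧ μ i ≤ hi := by
    intro i
    constructor
    · exact hmono (by exact Fin.mk_le_of_le_val (Nat.le_sub_one_of_lt i.2))
    · exact hmono (by exact Fin.mk_le_of_le_val (Nat.zero_le _))
  constructor
  · rw [one_div_mul_eq_div, le_div_iff₀ hn, hsum, ← h2, Finset.mul_sum]
    refine Finset.sum_le_sum fun v _ => ?_
    rw [heig v]
    exact mul_le_mul_of_nonneg_right (hbound _).1 (sq_nonneg _)
  · rw [one_div_mul_eq_div, div_le_iff₀ hn, hsum, ← h2, Finset.mul_sum]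
    refine Finset.sum_le_sum fun v _ => ?_
    rw [heig v]
    exact mul_le_mul_of_nonneg_right (hbound _).2 (sq_nonneg _)
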